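/- Let b > 0 and let V : ℝ → ℝ be Lebesgue integrable with ∫_ℝ V(x) dx > 0. Then there exists ε ∈ (0, 1] such that ∫_ℝ 4 sinh²(πbk)·(πb/(2ε))²·(1/cosh²(π²bk/(2ε))) dk < ∫_ℝ V(x)/cosh²(2εx/b) dx. -/

import Mathlib

open MeasureTheory Real Filter Set Topology

lemma my_abs_sinh_le (x : ℝ) : |Real.sinh x| ≤ |x| * Real.exp |x| := by
  rw [Real.abs_sinh]
  set y := |x| with hy
  have hy0 : 0 ≤ y := abs_nonneg x
  rw [Real.sinh_eq]
  have h2 : 1 - Real.exp (-(2*y)) ≤ 2*y := by nlinarith [Real.add_one_le_exp (-(2*y))]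
  have h3 : Real.exp (-y) = Real.exp y * Real.exp (-(2*y)) := by
    rw [← Real.exp_add]; ring_nf
  nlinarith [Real.exp_pos y, Real.exp_pos (-y)]

lemma my_exp_abs_le_two_cosh (x : ℝ) : Real.exp |x| ≤ 2 * Real.cosh x := by
  rw [Real.cosh_eq]
  rcases abs_cases x with ⟨h, _⟩ | ⟨h, _⟩ <;> rw [h] <;>
    nlinarith [Real.exp_pos x, Real.exp_pos (-x)]

lemma my_exp_sq (y : ℝ) : Real.exp y ^ 2 = Real.exp (2 * y) := by
  rw [sq, ← Real.exp_add]; ring_nf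

lemma my_pointwise_bound (b ε k : ℝ) (hb : 0 < b) (hε0 : 0 < ε) (hε1 : ε ≤ 1) :
    4 * Real.sinh (π * b * k) ^ 2 * (π * b / (2 * ε)) ^ 2 *
        (1 / Real.cosh (π ^ 2 * b * k / (2 * ε)) ^ 2)
      ≤ (4 * (π * b) ^ 4) * ((k / ε) ^ 2 *
          Real.exp (-(π * b * (π - 2)) * |k / ε|)) := by
  have hπ : (0:ℝ) < π := pi_pos
  have hs : Real.sinh (π * b * k) ^ 2 ≤ (π * b * k) ^ 2 * Real.exp (2 * |π * b * k|) := by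
    have h1 := my_abs_sinh_le (π * b * k)
    calc Real.sinh (π * b * k) ^ 2 = |Real.sinh (π * b * k)| ^ 2 := (sq_abs _).symm
      _ ≤ (|π * b * k| * Real.exp |π * b * k|) ^ 2 := by
          exact pow_le_pow_left₀ (abs_nonneg _) h1 2
      _ = (π * b * k) ^ 2 * Real.exp (2 * |π * b * k|) := by
          rw [mul_pow, sq_abs, my_exp_sq]
  have hc : 1 / Real.cosh (π ^ 2 * b * k / (2 * ε)) ^ 2
      ≤ 4 * Real.exp (-(2 * |π ^ 2 * b * k / (2 * ε)|)) := by
    set c := π ^ 2 * b * k / (2 * ε) with hcdef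
    have h1 := my_exp_abs_le_two_cosh c
    have h2 : Real.exp |c| ^ 2 ≤ (2 * Real.cosh c) ^ 2 :=
      pow_le_pow_left₀ (Real.exp_pos _).le h1 2
    have hE : Real.exp (-(2 * |c|)) * Real.exp |c| ^ 2 = 1 := by
      rw [my_exp_sq, ← Real.exp_add]; ring_nf; exact Real.exp_zero
    rw [div_le_iff₀ (by positivity)]
    nlinarith [Real.exp_pos (-(2 * |c|)), Real.exp_pos |c|, Real.cosh_pos (x := c)]
  have step1 : 4 * Real.sinh (π * b * k) ^ 2 * (π * b / (2 * ε)) ^ 2 *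
        (1 / Real.cosh (π ^ 2 * b * k / (2 * ε)) ^ 2)
      ≤ 4 * ((π * b * k) ^ 2 * Real.exp (2 * |π * b * k|)) * (π * b / (2 * ε)) ^ 2 *
        (4 * Real.exp (-(2 * |π ^ 2 * b * k / (2 * ε)|))) := by
    gcongr
  refine step1.trans ?_
  have heq : 4 * ((π * b * k) ^ 2 * Real.exp (2 * |π * b * k|)) * (π * b / (2 * ε)) ^ 2 *
        (4 * Real.exp (-(2 * |π ^ 2 * b * k / (2 * ε)|)))
      = (4 * (π * b) ^ 4) * ((k / ε) ^ 2 *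
          Real.exp (2 * |π * b * k| + -(2 * |π ^ 2 * b * k / (2 * ε)|))) := by
    rw [Real.exp_add]
    have hεne : ε ≠ 0 := hε0.ne'
    field_simp
    ring
  rw [heq]
  gcongr (4 * (π * b) ^ 4) * ((k / ε) ^ 2 * ?_)
  apply Real.exp_le_exp.mpr
  have habsx : |π * b * k| = π * b * |k| := by
    rw [abs_mul, abs_of_pos (mul_pos hπ hb)]
  have habsc : |π ^ 2 * b * k / (2 * ε)| = π ^ 2 * b * |k| / (2 * ε) := by
    rw [abs_div, abs_mul, abs_of_pos (by positivity : (0:ℝ) < π ^ 2 * b),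
      abs_of_pos (by positivity : (0:ℝ) < 2 * ε)]
  have habskε : |k / ε| = |k| / ε := by rw [abs_div, abs_of_pos hε0]
  rw [habsx, habsc, habskε, ← sub_nonneg]
  have expand : -(π * b * (π - 2)) * (|k| / ε) -
      (2 * (π * b * |k|) + -(2 * (π ^ 2 * b * |k| / (2 * ε))))
      = (2 * (π * b * |k|) * (1 - ε)) / ε := by
    field_simp
    ring
  rw [expand]
  apply div_nonneg _ hε0.le
  apply mul_nonneg (by positivity)
  linarith

lemma my_integrable_sq_exp_neg_abs {B : ℝ} (hB : 0 < B) :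
    Integrable (fun u : ℝ => u ^ 2 * Real.exp (-B * |u|)) := by
  have hcont : Continuous (fun u : ℝ => u ^ 2 * Real.exp (-B * |u|)) := by
    continuity
  apply hcont.locallyIntegrable.integrable_of_isBigO_atTop_of_norm_isNegInvariant
    (g := fun u : ℝ => Real.exp (-(B/2) * u))
  · exact Eventually.of_forall fun u => by simp [Function.comp, abs_neg]
  · have h1 : (fun u : ℝ => u ^ 2) =o[atTop] fun u => Real.exp ((B/2) * u) :=
      isLittleO_pow_exp_pos_mul_atTop 2 (half_pos hB)
    have h2 : (fun u : ℝ => u ^ 2 * Real.exp (-B * u)) =o[atTop]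
        fun u => Real.exp ((B/2) * u) * Real.exp (-B * u) :=
      h1.mul_isBigO (Asymptotics.isBigO_refl _ _)
    have h3 : (fun u : ℝ => Real.exp ((B/2) * u) * Real.exp (-B * u))
        = fun u => Real.exp (-(B/2) * u) := by
      funext u; rw [← Real.exp_add]; ring_nf
    rw [h3] at h2
    refine h2.isBigO.congr' ?_ EventuallyEq.rfl
    filter_upwards [eventually_ge_atTop (0:ℝ)] with u hu
    rw [abs_of_nonneg hu]
  · exact ⟨Ioi 0, Ioi_mem_atTop 0, exp_neg_integrableOn_Ioi 0 (half_pos hB)⟩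

theorem eigenvalue_below_two_exists (b : ℝ) (hb : 0 < b) (V : ℝ → ℝ)
    (hVint : Integrable V) (hVpos : 0 < ∫ x, V x) :
    ∃ ε ∈ Set.Ioc (0 : ℝ) 1,
      (∫ k : ℝ, 4 * Real.sinh (π * b * k) ^ 2 * (π * b / (2 * ε)) ^ 2 *
          (1 / Real.cosh (π ^ 2 * b * k / (2 * ε)) ^ 2))
        < ∫ x : ℝ, V x / Real.cosh (2 * ε * x / b) ^ 2 := by
  have hπ : (0:ℝ) < π := pi_pos
  have hB : 0 < π * b * (π - 2) := by
    have : (2:ℝ) < π := by nlinarith [pi_gt_three]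
    apply mul_pos (mul_pos hπ hb); linarith
  have hhint : Integrable (fun u : ℝ => u ^ 2 * Real.exp (-(π * b * (π - 2)) * |u|)) :=
    my_integrable_sq_exp_neg_abs hB
  set I : ℝ := ∫ u : ℝ, u ^ 2 * Real.exp (-(π * b * (π - 2)) * |u|) with hIdef
  have hI0 : 0 ≤ I := integral_nonneg fun u => by positivity
  set C : ℝ := 4 * (π * b) ^ 4 * I with hCdef
  have hC0 : 0 ≤ C := by positivity
  -- Integral bound for the LHS
  have lhs_bound : ∀ ε ∈ Set.Ioc (0:ℝ) 1,
      (∫ k : ℝ, 4 * Real.sinh (π * b * k) ^ 2 * (π * b / (2 * ε)) ^ 2 *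
          (1 / Real.cosh (π ^ 2 * b * k / (2 * ε)) ^ 2)) ≤ C * ε := by
    intro ε hε
    obtain ⟨hε0, hε1⟩ := hε
    have hint : Integrable (fun k : ℝ => 4 * (π * b) ^ 4 *
        ((k / ε) ^ 2 * Real.exp (-(π * b * (π - 2)) * |k / ε|))) :=
      (((MeasureTheory.integrable_comp_div_iff _ hε0.ne').2 hhint).const_mul _)
    have h1 : (∫ k : ℝ, 4 * Real.sinh (π * b * k) ^ 2 * (π * b / (2 * ε)) ^ 2 *
          (1 / Real.cosh (π ^ 2 * b * k / (2 * ε)) ^ 2))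
        ≤ ∫ k : ℝ, 4 * (π * b) ^ 4 *
            ((k / ε) ^ 2 * Real.exp (-(π * b * (π - 2)) * |k / ε|)) := by
      apply integral_mono_of_nonneg
      · exact Eventually.of_forall fun k => by positivity
      · exact hint
      · exact Eventually.of_forall fun k => my_pointwise_bound b ε k hb hε0 hε1
    have h2 : (∫ k : ℝ, 4 * (π * b) ^ 4 *
          ((k / ε) ^ 2 * Real.exp (-(π * b * (π - 2)) * |k / ε|))) = C * ε := by
      rw [integral_const_mul,
        MeasureTheory.Measure.integral_comp_div
          (fun u : ℝ => u ^ 2 * Real.exp (-(π * b * (π - 2)) * |u|)) ε,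
        abs_of_pos hε0, smul_eq_mul, hCdef, ← hIdef]
      ring
    linarith
  -- RHS convergence along εₙ = 1/(n+1)
  set εn : ℕ → ℝ := fun n => 1 / ((n : ℝ) + 1) with hεndef
  have hεn_mem : ∀ n, εn n ∈ Set.Ioc (0:ℝ) 1 := by
    intro n
    constructor
    · positivity
    · rw [div_le_one (by positivity)]
      linarith [Nat.cast_nonneg (α := ℝ) n]
  have hεn_lim : Tendsto εn atTop (𝓝 0) := tendsto_one_div_add_atTop_nhds_zero_nat
  have hRlim : Tendsto (fun n => ∫ x : ℝ, V x / Real.cosh (2 * εn n * x / b) ^ 2)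
      atTop (𝓝 (∫ x, V x)) := by
    apply tendsto_integral_of_dominated_convergence (fun x => |V x|)
    · intro n
      exact (hVint.aemeasurable.div
        ((Real.continuous_cosh.comp (by continuity)).pow 2).measurable.aemeasurable).aestronglyMeasurable
    · exact hVint.abs
    · intro n
      refine Eventually.of_forall fun x => ?_
      have hch : 1 ≤ Real.cosh (2 * εn n * x / b) ^ 2 := by
        nlinarith [Real.one_le_cosh (2 * εn n * x / b)]
      rw [norm_div, Real.norm_eq_abs, Real.norm_eq_abs,
        abs_of_pos (by positivity : (0:ℝ) < Real.cosh (2 * εn n * x / b) ^ 2)]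
      exact div_le_self (abs_nonneg _) hch
    · refine Eventually.of_forall fun x => ?_
      have hcont : Continuous fun t : ℝ => V x / Real.cosh (2 * t * x / b) ^ 2 := by
        apply continuous_const.div
        · exact (Real.continuous_cosh.comp (by continuity)).pow 2
        · intro t; positivity
      have := (hcont.tendsto 0).comp hεn_lim
      simpa [Function.comp_def] using this
  -- Conclusion
  have hClim : Tendsto (fun n => C * εn n) atTop (𝓝 0) := by
    have h0 := hεn_lim.const_mul C
    rw [mul_zero] at h0
    exact h0
  have hdiff : Tendsto
      (fun n => (∫ x : ℝ, V x / Real.cosh (2 * εn n * x / b) ^ 2) - C * εn n)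
      atTop (𝓝 ((∫ x, V x) - 0)) := hRlim.sub hClim
  have hev : ∀ᶠ n in atTop,
      0 < (∫ x : ℝ, V x / Real.cosh (2 * εn n * x / b) ^ 2) - C * εn n :=
    hdiff.eventually (eventually_gt_nhds (by simpa using hVpos))
  obtain ⟨n, hn⟩ := hev.exists
  refine ⟨εn n, hεn_mem n, ?_⟩
  have := lhs_bound (εn n) (hεn_mem n)
  linarith
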